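/- Let p(x,y|v,w) (v,w ∈ I₁, x,y ∈ O₁, both finite) and q(a,b|x,y) (x,y ∈ O₁, a,b ∈ O₂, finite) be vectorial correlations. Then r(a,b|v,w) := Σ_{x,y} q(a,b|x,y) p(x,y|v,w) is a vectorial correlation with input set I₁ and output set O₂. -/

import Mathlib

open scoped InnerProductSpace

/-- A realization of a family `p(x,y|v,w)` (inputs in `I`, outputs in `O`) as a
vectorial correlation: a complex Hilbert space together with vectors `X v x`, `Y w y`
satisfying the defining conditions, with `p(x,y|v,w) = ⟪X v x, Y w y⟫ ≥ 0`. -/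
structure VectRealization {I O : Type} [Fintype O] (p : O → O → I → I → ℝ) where
  H : Type
  [nacg : NormedAddCommGroup H]
  [ips : InnerProductSpace ℂ H]
  [cs : CompleteSpace H]
  X : I → O → H
  Y : I → O → H
  orthX : ∀ v : I, ∀ x y : O, x ≠ y → ⟪X v x, X v y⟫_ℂ = 0
  orthY : ∀ w : I, ∀ x y : O, x ≠ y → ⟪Y w x, Y w y⟫_ℂ = 0
  sumEq : ∀ v w : I, ∑ x, X v x = ∑ y, Y w y
  normOne : ∀ v : I, ‖∑ x, X v x‖ = 1
  nonneg : ∀ v w : I, ∀ x y : O, 0 ≤ p x y v w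
  eq : ∀ (x y : O) (v w : I), (p x y v w : ℂ) = ⟪X v x, Y w y⟫_ℂ

/-- `p` is a vectorial correlation if it admits a vectorial realization. -/
def IsVectCorrelation {I O : Type} [Fintype O] (p : O → O → I → I → ℝ) : Prop :=
  Nonempty (VectRealization p)

section TensAux

variable {ι₁ ι₂ E₁ E₂ : Type} [Fintype ι₁] [Fintype ι₂]
  [NormedAddCommGroup E₁] [InnerProductSpace ℂ E₁]
  [NormedAddCommGroup E₂] [InnerProductSpace ℂ E₂]

/-- "Tensor product" of two vectors realized concretely in a Euclidean space via
orthonormal bases. -/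
noncomputable def tens (b₁ : OrthonormalBasis ι₁ ℂ E₁) (b₂ : OrthonormalBasis ι₂ ℂ E₂)
    (u : E₁) (w : E₂) : EuclideanSpace ℂ (ι₁ × ι₂) :=
  WithLp.toLp 2 (fun ij : ι₁ × ι₂ => ⟪b₁ ij.1, u⟫_ℂ * ⟪b₂ ij.2, w⟫_ℂ)

lemma tens_inner (b₁ : OrthonormalBasis ι₁ ℂ E₁) (b₂ : OrthonormalBasis ι₂ ℂ E₂)
    (u u' : E₁) (w w' : E₂) :
    ⟪tens b₁ b₂ u w, tens b₁ b₂ u' w'⟫_ℂ = ⟪u, u'⟫_ℂ * ⟪w, w'⟫_ℂ := by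
  rw [← b₁.sum_inner_mul_inner u u', ← b₂.sum_inner_mul_inner w w']
  rw [PiLp.inner_apply]
  rw [Fintype.sum_prod_type, Finset.sum_mul_sum]
  refine Finset.sum_congr rfl fun i _ => Finset.sum_congr rfl fun j _ => ?_
  simp only [tens, PiLp.toLp_apply, RCLike.inner_apply, map_mul, ← inner_conj_symm u (b₁ i),
    ← inner_conj_symm w (b₂ j)]
  simp only [starRingEnd_apply, star_star]
  ring

lemma tens_sum_left (b₁ : OrthonormalBasis ι₁ ℂ E₁) (b₂ : OrthonormalBasis ι₂ ℂ E₂)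
    {α : Type} (s : Finset α) (f : α → E₁) (w : E₂) :
    ∑ x ∈ s, tens b₁ b₂ (f x) w = tens b₁ b₂ (∑ x ∈ s, f x) w := by
  ext ij
  rw [WithLp.ofLp_sum, Finset.sum_apply]
  simp only [tens, PiLp.toLp_apply, inner_sum, Finset.sum_mul]

lemma tens_sum_right (b₁ : OrthonormalBasis ι₁ ℂ E₁) (b₂ : OrthonormalBasis ι₂ ℂ E₂)
    {α : Type} (s : Finset α) (u : E₁) (g : α → E₂) :
    ∑ x ∈ s, tens b₁ b₂ u (g x) = tens b₁ b₂ u (∑ x ∈ s, g x) := by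
  ext ij
  rw [WithLp.ofLp_sum, Finset.sum_apply]
  simp only [tens, PiLp.toLp_apply, inner_sum, Finset.mul_sum]

end TensAux

/-- The composition `r(a,b|v,w) = Σ_{x,y} q(a,b|x,y) p(x,y|v,w)` of two vectorial
correlations is again a vectorial correlation. -/
theorem isVectCorrelation_comp {I₁ O₁ O₂ : Type} [Fintype I₁] [Fintype O₁] [Fintype O₂]
    (p : O₁ → O₁ → I₁ → I₁ → ℝ) (q : O₂ → O₂ → O₁ → O₁ → ℝ)
    (hp : IsVectCorrelation p) (hq : IsVectCorrelation q) :
    IsVectCorrelation (fun a b v w => ∑ x, ∑ y, q a b x y * p x y v w) := by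
  obtain ⟨R⟩ := hp
  obtain ⟨S⟩ := hq
  letI := R.nacg; letI := R.ips
  letI := S.nacg; letI := S.ips
  -- finite-dimensional subspaces spanned by the relevant vectors
  set A₁ : Set R.H :=
    (Set.range fun vx : I₁ × O₁ => R.X vx.1 vx.2) ∪
    (Set.range fun vx : I₁ × O₁ => R.Y vx.1 vx.2) with hA₁
  set A₂ : Set S.H :=
    (Set.range fun xa : O₁ × O₂ => S.X xa.1 xa.2) ∪
    (Set.range fun xa : O₁ × O₂ => S.Y xa.1 xa.2) with hA₂
  have hA₁fin : A₁.Finite := ((Set.finite_range _).union (Set.finite_range _))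
  have hA₂fin : A₂.Finite := ((Set.finite_range _).union (Set.finite_range _))
  set E₁ := Submodule.span ℂ A₁ with hE₁
  set E₂ := Submodule.span ℂ A₂ with hE₂
  haveI : FiniteDimensional ℂ E₁ := FiniteDimensional.span_of_finite ℂ hA₁fin
  haveI : FiniteDimensional ℂ E₂ := FiniteDimensional.span_of_finite ℂ hA₂fin
  let b₁ := stdOrthonormalBasis ℂ E₁
  let b₂ := stdOrthonormalBasis ℂ E₂
  -- the vectors, as members of the subspaces
  have hX₁ : ∀ v x, R.X v x ∈ E₁ := fun v x =>
    Submodule.subset_span (Or.inl ⟨(v, x), rfl⟩)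
  have hY₁ : ∀ w y, R.Y w y ∈ E₁ := fun w y =>
    Submodule.subset_span (Or.inr ⟨(w, y), rfl⟩)
  have hX₂ : ∀ x a, S.X x a ∈ E₂ := fun x a =>
    Submodule.subset_span (Or.inl ⟨(x, a), rfl⟩)
  have hY₂ : ∀ y b, S.Y y b ∈ E₂ := fun y b =>
    Submodule.subset_span (Or.inr ⟨(y, b), rfl⟩)
  let X' : I₁ → O₁ → E₁ := fun v x => ⟨R.X v x, hX₁ v x⟩
  let Y' : I₁ → O₁ → E₁ := fun w y => ⟨R.Y w y, hY₁ w y⟩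
  let A' : O₁ → O₂ → E₂ := fun x a => ⟨S.X x a, hX₂ x a⟩
  let B' : O₁ → O₂ → E₂ := fun y b => ⟨S.Y y b, hY₂ y b⟩
  -- the composed vectors
  let Z : I₁ → O₂ → EuclideanSpace ℂ (Fin (Module.finrank ℂ E₁) × Fin (Module.finrank ℂ E₂)) :=
    fun v a => ∑ x, tens b₁ b₂ (X' v x) (A' x a)
  let W : I₁ → O₂ → EuclideanSpace ℂ (Fin (Module.finrank ℂ E₁) × Fin (Module.finrank ℂ E₂)) :=
    fun w b => ∑ y, tens b₁ b₂ (Y' w y) (B' y b)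
  have innerZW : ∀ (v w : I₁) (a b : O₂),
      ⟪Z v a, W w b⟫_ℂ = ∑ x, ∑ y, ⟪R.X v x, R.Y w y⟫_ℂ * ⟪S.X x a, S.Y y b⟫_ℂ := by
    intro v w a b
    rw [sum_inner]
    refine Finset.sum_congr rfl fun x _ => ?_
    rw [inner_sum]
    refine Finset.sum_congr rfl fun y _ => ?_
    rw [tens_inner, Submodule.coe_inner, Submodule.coe_inner]
  have innerZZ : ∀ (v w : I₁) (a b : O₂),
      ⟪Z v a, Z w b⟫_ℂ = ∑ x, ∑ y, ⟪R.X v x, R.X w y⟫_ℂ * ⟪S.X x a, S.X y b⟫_ℂ := by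
    intro v w a b
    rw [sum_inner]
    refine Finset.sum_congr rfl fun x _ => ?_
    rw [inner_sum]
    refine Finset.sum_congr rfl fun y _ => ?_
    rw [tens_inner, Submodule.coe_inner, Submodule.coe_inner]
  have innerWW : ∀ (v w : I₁) (a b : O₂),
      ⟪W v a, W w b⟫_ℂ = ∑ x, ∑ y, ⟪R.Y v x, R.Y w y⟫_ℂ * ⟪S.Y x a, S.Y y b⟫_ℂ := by
    intro v w a b
    rw [sum_inner]
    refine Finset.sum_congr rfl fun x _ => ?_
    rw [inner_sum]
    refine Finset.sum_congr rfl fun y _ => ?_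
    rw [tens_inner, Submodule.coe_inner, Submodule.coe_inner]
  -- common sums in the subspaces
  have hsum₂ : ∀ x y : O₁, (∑ a, A' x a) = ∑ b, B' y b := by
    intro x y
    apply Subtype.coe_injective
    push_cast
    exact S.sumEq x y
  have hsum₁ : ∀ v w : I₁, (∑ x, X' v x) = ∑ y, Y' w y := by
    intro v w
    apply Subtype.coe_injective
    push_cast
    exact R.sumEq v w
  -- I₁ empty: trivial realization
  by_cases hI : Nonempty I₁
  swap
  · exact ⟨{ H := ℂ
             X := fun v _ => (hI ⟨v⟩).elim
             Y := fun v _ => (hI ⟨v⟩).elim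
             orthX := fun v => (hI ⟨v⟩).elim
             orthY := fun v => (hI ⟨v⟩).elim
             sumEq := fun v => (hI ⟨v⟩).elim
             normOne := fun v => (hI ⟨v⟩).elim
             nonneg := fun v => (hI ⟨v⟩).elim
             eq := fun _ _ v => (hI ⟨v⟩).elim }⟩
  obtain ⟨v₀⟩ := hI
  -- O₁ is nonempty since ‖∑ x, X v₀ x‖ = 1
  have hO₁ : Nonempty O₁ := by
    by_contra h
    haveI : IsEmpty O₁ := not_nonempty_iff.mp h
    have := R.normOne v₀
    rw [Finset.univ_eq_empty, Finset.sum_empty, norm_zero] at this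
    exact zero_ne_one this
  obtain ⟨x₀⟩ := hO₁
  set s : E₂ := ∑ b, B' x₀ b with hs
  have hA's : ∀ x, (∑ a, A' x a) = s := fun x => hsum₂ x x₀
  have hB's : ∀ y, (∑ b, B' y b) = s := fun y => (hsum₂ x₀ y).symm.trans (hsum₂ x₀ x₀)
  have sumZ : ∀ v, ∑ a, Z v a = tens b₁ b₂ (∑ x, X' v x) s := by
    intro v
    calc ∑ a, Z v a = ∑ x, ∑ a, tens b₁ b₂ (X' v x) (A' x a) := Finset.sum_comm
      _ = ∑ x, tens b₁ b₂ (X' v x) s := by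
          refine Finset.sum_congr rfl fun x _ => ?_
          rw [tens_sum_right, hA's]
      _ = tens b₁ b₂ (∑ x, X' v x) s := tens_sum_left _ _ _ _ _
  have sumW : ∀ w, ∑ b, W w b = tens b₁ b₂ (∑ y, Y' w y) s := by
    intro w
    calc ∑ b, W w b = ∑ y, ∑ b, tens b₁ b₂ (Y' w y) (B' y b) := Finset.sum_comm
      _ = ∑ y, tens b₁ b₂ (Y' w y) s := by
          refine Finset.sum_congr rfl fun y _ => ?_
          rw [tens_sum_right, hB's]
      _ = tens b₁ b₂ (∑ y, Y' w y) s := tens_sum_left _ _ _ _ _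
  have hscoe : (s : S.H) = ∑ b, S.Y x₀ b := by rw [hs]; push_cast; rfl
  have hsnorm : ‖(s : S.H)‖ = 1 := by
    rw [hscoe, ← S.sumEq x₀ x₀]; exact S.normOne x₀
  refine ⟨{ H := EuclideanSpace ℂ (Fin (Module.finrank ℂ E₁) × Fin (Module.finrank ℂ E₂))
            X := Z
            Y := W
            orthX := ?_
            orthY := ?_
            sumEq := ?_
            normOne := ?_
            nonneg := ?_
            eq := ?_ }⟩
  · -- orthX
    intro v a b hab
    rw [innerZZ]
    refine Finset.sum_eq_zero fun x _ => Finset.sum_eq_zero fun y _ => ?_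
    by_cases hxy : x = y
    · subst hxy
      rw [S.orthX x a b hab, mul_zero]
    · rw [R.orthX v x y hxy, zero_mul]
  · -- orthY
    intro w a b hab
    rw [innerWW]
    refine Finset.sum_eq_zero fun x _ => Finset.sum_eq_zero fun y _ => ?_
    by_cases hxy : x = y
    · subst hxy
      rw [S.orthY x a b hab, mul_zero]
    · rw [R.orthY w x y hxy, zero_mul]
  · -- sumEq
    intro v w
    rw [sumZ, sumW, hsum₁ v w]
  · -- normOne
    intro v
    rw [sumZ]
    have h2 : ⟪tens b₁ b₂ (∑ x, X' v x) s, tens b₁ b₂ (∑ x, X' v x) s⟫_ℂ = 1 := by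
      rw [tens_inner, Submodule.coe_inner, Submodule.coe_inner]
      have h1 : ((∑ x, X' v x : E₁) : R.H) = ∑ x, R.X v x := by push_cast; rfl
      rw [h1, hscoe, ← S.sumEq x₀ x₀]
      rw [inner_self_eq_norm_sq_to_K, inner_self_eq_norm_sq_to_K, R.normOne v, S.normOne x₀]
      norm_num
    have h3 := inner_self_eq_norm_sq_to_K (𝕜 := ℂ)
      (x := tens b₁ b₂ (∑ x, X' v x) s)
    rw [h2] at h3
    have h4 : (‖tens b₁ b₂ (∑ x, X' v x) s‖ : ℝ) ^ 2 = 1 := by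
      have h5 : ((‖tens b₁ b₂ (∑ x, X' v x) s‖ ^ 2 : ℝ) : ℂ) = 1 := by
        push_cast
        exact h3.symm
      exact_mod_cast h5
    nlinarith [norm_nonneg (tens b₁ b₂ (∑ x, X' v x) s)]
  · -- nonneg
    intro v w a b
    refine Finset.sum_nonneg fun x _ => Finset.sum_nonneg fun y _ => ?_
    exact mul_nonneg (S.nonneg x y a b) (R.nonneg v w x y)
  · -- eq
    intro a b v w
    rw [innerZW]
    push_cast
    refine Finset.sum_congr rfl fun x _ => Finset.sum_congr rfl fun y _ => ?_
    rw [← R.eq x y v w, ← S.eq a b x y]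
    ring
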